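/- Let K be a finite-dimensional complex Hilbert space and let M be a von Neumann algebra on K (a subset of the algebra L(K) of linear operators on K closed under addition, operator multiplication, scalar multiplication and adjoints, and containing the identity operator of L(K)). Then the double commutant of M equals M, i.e. M'' = M. -/

import Mathlib

open Matrix

/-- The commutant `M' = {B : A * B = B * A for all A ∈ M}` of a set of operators on a
finite-dimensional complex Hilbert space (operators are represented as matrices with
respect to a fixed orthonormal basis indexed by `ι`). -/
def commutant {ι : Type*} [Fintype ι] (M : Set (Matrix ι ι ℂ)) : Set (Matrix ι ι ℂ) :=
  {B | ∀ A ∈ M, A * B = B * A}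

/-- A von Neumann algebra on a finite-dimensional complex Hilbert space: a set of operators
closed under addition, multiplication, scalar multiplication and adjoints, containing the
identity operator. -/
structure IsVNAlgebra {ι : Type*} [Fintype ι] [DecidableEq ι]
    (M : Set (Matrix ι ι ℂ)) : Prop where
  add_mem : ∀ A ∈ M, ∀ B ∈ M, A + B ∈ M
  mul_mem : ∀ A ∈ M, ∀ B ∈ M, A * B ∈ M
  smul_mem : ∀ (c : ℂ), ∀ A ∈ M, c • A ∈ M
  star_mem : ∀ A ∈ M, Aᴴ ∈ M
  one_mem : (1 : Matrix ι ι ℂ) ∈ M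

section Aux

variable {ι : Type*} [Fintype ι] [DecidableEq ι]

/-- Matrices viewed as a Euclidean (Hilbert–Schmidt) space. -/
noncomputable def matE : Matrix ι ι ℂ ≃ₗ[ℂ] EuclideanSpace ℂ (ι × ι) where
  toFun X := WithLp.toLp 2 (fun p : ι × ι => X p.1 p.2)
  invFun v := fun i j => v (i, j)
  map_add' _ _ := rfl
  map_smul' _ _ := rfl
  left_inv _ := rfl
  right_inv _ := rfl

omit [DecidableEq ι] in
lemma inner_matE (X Y : Matrix ι ι ℂ) :
    (inner ℂ (matE X) (matE Y) : ℂ) = (Xᴴ * Y).trace := by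
  simp only [PiLp.inner_apply, RCLike.inner_apply, Matrix.trace, Matrix.diag,
    Matrix.mul_apply, Matrix.conjTranspose_apply]
  rw [Fintype.sum_prod_type, Finset.sum_comm]
  exact Finset.sum_congr rfl fun _ _ => Finset.sum_congr rfl fun _ _ => mul_comm _ _

variable (M : Set (Matrix ι ι ℂ)) (hM : IsVNAlgebra M)

/-- `M` as a subspace of the Hilbert–Schmidt space. -/
noncomputable def vnSub : Submodule ℂ (EuclideanSpace ℂ (ι × ι)) where
  carrier := {x | matE.symm x ∈ M}
  add_mem' {a b} ha hb := by
    have := hM.add_mem _ ha _ hb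
    simpa [map_add] using this
  zero_mem' := by
    have := hM.smul_mem 0 _ hM.one_mem
    simpa using this
  smul_mem' c a ha := by
    have := hM.smul_mem c _ ha
    simpa [_root_.map_smul] using this

lemma mem_vnSub {x : EuclideanSpace ℂ (ι × ι)} : x ∈ vnSub M hM ↔ matE.symm x ∈ M :=
  Iff.rfl

lemma matE_mem_vnSub {X : Matrix ι ι ℂ} (h : X ∈ M) : matE X ∈ vnSub M hM := by
  rw [mem_vnSub]; simpa using h

/-- The orthogonal projection onto `M`, as a linear map on matrices. -/
noncomputable def vnQ : Matrix ι ι ℂ →ₗ[ℂ] Matrix ι ι ℂ :=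
  matE.symm.toLinearMap ∘ₗ (vnSub M hM).subtype ∘ₗ
    (Submodule.orthogonalProjection (vnSub M hM)).toLinearMap ∘ₗ matE.toLinearMap

lemma vnQ_apply (X : Matrix ι ι ℂ) :
    vnQ M hM X = matE.symm (Submodule.orthogonalProjection (vnSub M hM) (matE X) : EuclideanSpace ℂ (ι × ι)) :=
  rfl

lemma vnQ_mem (X : Matrix ι ι ℂ) : vnQ M hM X ∈ M := by
  rw [vnQ_apply]
  exact (mem_vnSub M hM).mp (Submodule.coe_mem _)

lemma vnQ_of_mem {X : Matrix ι ι ℂ} (h : X ∈ M) : vnQ M hM X = X := by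
  rw [vnQ_apply]
  have : (Submodule.orthogonalProjection (vnSub M hM) (matE X) : EuclideanSpace ℂ (ι × ι)) = matE X := by
    exact congrArg _ (Submodule.orthogonalProjection_mem_subspace_eq_self (K := vnSub M hM)
      ⟨matE X, matE_mem_vnSub M hM h⟩)
  rw [this]; simp

/-- key equivariance: the projection commutes with left multiplication by elements of `M`. -/
lemma vnQ_mul {A : Matrix ι ι ℂ} (hA : A ∈ M) (X : Matrix ι ι ℂ) :
    vnQ M hM (A * X) = A * vnQ M hM X := by
  have key : (Submodule.orthogonalProjection (vnSub M hM) (matE (A * X)) : EuclideanSpace ℂ (ι × ι))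
      = matE (A * vnQ M hM X) := by
    apply Submodule.eq_starProjection_of_mem_orthogonal
    · exact matE_mem_vnSub M hM (hM.mul_mem _ hA _ (vnQ_mem M hM X))
    · rw [Submodule.mem_orthogonal]
      intro u hu
      have hform : matE (A * X) - matE (A * vnQ M hM X) = matE (A * (X - vnQ M hM X)) := by
        rw [← map_sub, mul_sub]
      rw [hform]
      set U : Matrix ι ι ℂ := matE.symm u with hU
      have hu' : u = matE U := by simp [hU]
      rw [hu', inner_matE]
      have : Uᴴ * (A * (X - vnQ M hM X)) = (Aᴴ * U)ᴴ * (X - vnQ M hM X) := by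
        rw [conjTranspose_mul, conjTranspose_conjTranspose, mul_assoc]
      rw [this, ← inner_matE]
      have horth : matE (X - vnQ M hM X) ∈ (vnSub M hM)ᗮ := by
        rw [map_sub, vnQ_apply]
        simp only [LinearEquiv.apply_symm_apply]
        exact Submodule.sub_starProjection_mem_orthogonal _
      have hmem : matE (Aᴴ * U) ∈ vnSub M hM :=
        matE_mem_vnSub M hM (hM.mul_mem _ (hM.star_mem _ hA) _ ((mem_vnSub M hM).mp hu))
      exact (Submodule.mem_orthogonal (vnSub M hM) _).mp horth _ hmem
  apply matE.injective
  have : matE (vnQ M hM (A * X))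
      = (Submodule.orthogonalProjection (vnSub M hM) (matE (A * X)) : EuclideanSpace ℂ (ι × ι)) := by
    rw [vnQ_apply]; simp
  rw [this, key]

lemma mul_stdBasis_eq_sum (C : Matrix ι ι ℂ) (q k : ι) :
    C * single q k (1 : ℂ) = ∑ r, C r q • single r k (1 : ℂ) := by
  ext a b
  rw [Matrix.sum_apply]
  by_cases hb : b = k
  · subst hb
    rw [Matrix.mul_single_apply_same]
    simp [Matrix.smul_apply, Matrix.single, Finset.sum_ite_eq]
  · simp [Matrix.smul_apply, hb, Ne.symm hb]

end Aux

/-- bicommutant theorem: for every von Neumann algebra `M` on a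
finite-dimensional complex Hilbert space, the double commutant equals `M`: `M'' = M`. -/
theorem bicommutant_eq_self {ι : Type*} [Fintype ι] [DecidableEq ι]
    (M : Set (Matrix ι ι ℂ)) (hM : IsVNAlgebra M) :
    commutant (commutant M) = M := by
  apply Set.eq_of_subset_of_subset
  · -- hard direction
    intro T hT
    -- the blocks of the projection lie in the commutant of M
    set Q := vnQ M hM with hQ
    have hblock : ∀ j k : ι, (Matrix.of fun p q => Q (single q k (1:ℂ)) p j) ∈ commutant M := by
      intro j k A hA
      ext p q
      have h1 : (A * Matrix.of fun p q => Q (single q k (1:ℂ)) p j) p q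
          = (A * Q (single q k (1:ℂ))) p j := by
        simp [Matrix.mul_apply]
      have h2 : ((Matrix.of fun p q => Q (single q k (1:ℂ)) p j) * A) p q
          = Q (A * single q k (1:ℂ)) p j := by
        simp only [Matrix.mul_apply, Matrix.of_apply]
        rw [mul_stdBasis_eq_sum, map_sum]
        rw [Matrix.sum_apply]
        congr 1; ext r
        rw [LinearMap.map_smul]
        simp [mul_comm]
      rw [h1, h2, vnQ_mul M hM hA]
    -- hence T commutes with the projection on basis matrices
    have hTQ : ∀ q k : ι, T * Q (single q k (1:ℂ)) = Q (T * single q k (1:ℂ)) := by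
      intro q k
      ext p j
      have := hT _ (hblock j k)
      have h := (congrFun (congrFun this p) q).symm
      have h1 : (T * Matrix.of fun p q => Q (single q k (1:ℂ)) p j) p q
          = (T * Q (single q k (1:ℂ))) p j := by
        simp [Matrix.mul_apply]
      have h2 : ((Matrix.of fun p q => Q (single q k (1:ℂ)) p j) * T) p q
          = Q (T * single q k (1:ℂ)) p j := by
        simp only [Matrix.mul_apply, Matrix.of_apply]
        rw [mul_stdBasis_eq_sum, map_sum]
        rw [Matrix.sum_apply]
        congr 1; ext r
        rw [LinearMap.map_smul]
        simp [mul_comm]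
      rw [h1, h2] at h
      exact h
    -- conclude T = Q T ∈ M
    have hone : (1 : Matrix ι ι ℂ) = ∑ k, single k k (1:ℂ) := by
      ext a b
      rw [Matrix.sum_apply]
      by_cases hab : a = b
      · subst hab
        simp [Matrix.one_apply, Matrix.single, Finset.sum_ite_eq]
      · rw [Matrix.one_apply_ne hab]
        symm
        apply Finset.sum_eq_zero
        intro x _
        exact Matrix.single_apply_of_ne x x (1:ℂ) a b (fun h => hab (h.1.symm.trans h.2))
    have : T = Q T := by
      calc T = T * Q 1 := by rw [vnQ_of_mem M hM hM.one_mem, mul_one]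
        _ = ∑ k, T * Q (single k k (1:ℂ)) := by
            rw [hone, map_sum, Finset.mul_sum]
        _ = ∑ k, Q (T * single k k (1:ℂ)) := by
            exact Finset.sum_congr rfl fun k _ => hTQ k k
        _ = Q (T * 1) := by rw [hone, Finset.mul_sum, map_sum]
        _ = Q T := by rw [mul_one]
    rw [this]
    exact vnQ_mem M hM T
  · -- easy direction
    intro A hA B hB
    exact (hB A hA).symm
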